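/- Let Ω ∈ ℝ^{p×p} be nonnegative with all row sums at most ρ < 1, and define for b > 0 and constants c₁, c₂, r > 0 a matrix η with max_j (η J)_j ≤ c₂ exp(-c₂' b^r). Then for the choice b = C u^{1/(r+1)} (C an appropriate constant), the quantity 2v ρ^{⌊u/b⌋+1} + 2v·max_j(ηJ)_j·ρ/(1-ρ) is bounded above by a₁ v exp(-a₂ u^{r/(r+1)}) for all u ≥ 0, for constants a₁, a₂ depending only on ρ, c₂, c₂', r. -/

import Mathlib

open Real

/-- With the truncation level chosen as `b = C u^{1/(r+1)}`, the bound
`2vρ^{⌊u/b⌋+1} + 2v max_j(ηJ)_j ρ/(1-ρ)` decays as `a₁ v exp(-a₂ u^{r/(r+1)})`. -/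
theorem stmt_7 (ρ c₂ c₂' r v : ℝ) (hρ0 : 0 < ρ) (hρ1 : ρ < 1)
    (hc₂ : 0 < c₂) (hc₂' : 0 < c₂') (hr : 0 < r) (hv : 0 < v)
    (m : ℝ → ℝ) (hm0 : ∀ b, 0 ≤ m b)
    (hm : ∀ b, 0 ≤ b → m b ≤ c₂ * Real.exp (-c₂' * b ^ r)) :
    ∃ C a₁ a₂ : ℝ, 0 < C ∧ 0 < a₁ ∧ 0 < a₂ ∧
      ∀ u : ℝ, 0 ≤ u →
        2 * v * ρ ^ (⌊u / (C * u ^ ((1 : ℝ) / (r + 1)))⌋₊ + 1) +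
            2 * v * m (C * u ^ ((1 : ℝ) / (r + 1))) * ρ / (1 - ρ) ≤
          a₁ * v * Real.exp (-a₂ * u ^ (r / (r + 1))) := by
  have h1ρ : 0 < 1 - ρ := by linarith
  have hlog : 0 < -Real.log ρ := neg_pos.mpr (Real.log_neg hρ0 hρ1)
  set a₂ := min (-Real.log ρ) c₂' with ha₂def
  have ha₂ : 0 < a₂ := lt_min hlog hc₂'
  refine ⟨1, 2 + 2 * c₂ * ρ / (1 - ρ), a₂, one_pos, by positivity, ha₂, ?_⟩
  intro u hu
  have hr1 : 0 < r + 1 := by linarith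
  have hexp_ne : (1 : ℝ) / (r + 1) ≠ 0 := by positivity
  rcases eq_or_lt_of_le hu with h0 | hu
  · -- u = 0
    subst h0
    rw [Real.zero_rpow hexp_ne, Real.zero_rpow (by positivity : r / (r+1) ≠ 0)]
    simp only [mul_zero, div_zero, Nat.floor_zero, pow_one, mul_zero, neg_zero,
      Real.exp_zero, mul_one]
    have hm00 := hm 0 le_rfl
    rw [Real.zero_rpow (ne_of_gt hr), mul_zero, Real.exp_zero, mul_one] at hm00
    have h1 : 2 * v * ρ ^ (0 + 1) ≤ 2 * v := by
      rw [zero_add, pow_one]; nlinarith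
    have h2 : 2 * v * m 0 * ρ / (1 - ρ) ≤ 2 * c₂ * ρ / (1 - ρ) * v := by
      calc 2 * v * m 0 * ρ / (1 - ρ) ≤ 2 * v * c₂ * ρ / (1 - ρ) := by gcongr
        _ = 2 * c₂ * ρ / (1 - ρ) * v := by ring
    have heq : (2 + 2 * c₂ * ρ / (1 - ρ)) * v = 2 * v + 2 * c₂ * ρ / (1 - ρ) * v := by ring
    rw [heq]
    nlinarith [h1, h2]
  · -- u > 0
    set b := u ^ ((1 : ℝ) / (r + 1)) with hbdef
    have hb : 0 < b := Real.rpow_pos_of_pos hu _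
    set t := u ^ (r / (r + 1)) with htdef
    have ht : 0 < t := Real.rpow_pos_of_pos hu _
    have hub : u / (1 * b) = t := by
      have h : u ^ ((1:ℝ) - 1 / (r + 1)) = u / u ^ ((1:ℝ) / (r + 1)) := by
        rw [Real.rpow_sub hu, Real.rpow_one]
      rw [one_mul, hbdef, htdef, ← h]
      congr 1
      field_simp
      ring
    have hbr : b ^ r = t := by
      rw [hbdef, ← Real.rpow_mul hu.le, htdef]
      congr 1
      field_simp
    have hmb := hm b hb.le
    rw [hbr] at hmb
    set E := Real.exp (-a₂ * t) with hEdef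
    have hE : 0 < E := Real.exp_pos _
    -- bound first term
    have hfloor : t ≤ (⌊u / (1 * b)⌋₊ + 1 : ℕ) := by
      rw [← hub]
      push_cast
      exact (Nat.lt_floor_add_one _).le
    have hpow : ρ ^ (⌊u / (1 * b)⌋₊ + 1) ≤ E := by
      have h1 : ρ ^ (⌊u / (1 * b)⌋₊ + 1) = ρ ^ (((⌊u / (1 * b)⌋₊ + 1 : ℕ) : ℝ)) := by
        rw [Real.rpow_natCast]
      rw [h1]
      calc ρ ^ (((⌊u / (1 * b)⌋₊ + 1 : ℕ) : ℝ)) ≤ ρ ^ t :=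
            Real.rpow_le_rpow_of_exponent_ge hρ0 hρ1.le hfloor
        _ = Real.exp (Real.log ρ * t) := by rw [Real.rpow_def_of_pos hρ0]
        _ ≤ E := by
            rw [hEdef]
            apply Real.exp_le_exp.mpr
            have hle : Real.log ρ ≤ -a₂ := by
              have := min_le_left (-Real.log ρ) c₂'
              linarith
            nlinarith [ht.le]
    -- bound second term
    have hEc : Real.exp (-c₂' * t) ≤ E := by
      apply Real.exp_le_exp.mpr
      have hle : a₂ ≤ c₂' := min_le_right _ _
      nlinarith
    have hmbE : m (1 * b) ≤ c₂ * E := by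
      rw [one_mul]
      calc m b ≤ c₂ * Real.exp (-c₂' * t) := hmb
        _ ≤ c₂ * E := by nlinarith
    have hfirst : 2 * v * ρ ^ (⌊u / (1 * b)⌋₊ + 1) ≤ 2 * v * E := by nlinarith
    have hsecond : 2 * v * m (1 * b) * ρ / (1 - ρ) ≤ 2 * c₂ * ρ / (1 - ρ) * v * E := by
      calc 2 * v * m (1 * b) * ρ / (1 - ρ) ≤ 2 * v * (c₂ * E) * ρ / (1 - ρ) := by
            gcongr
        _ = 2 * c₂ * ρ / (1 - ρ) * v * E := by ring
    calc 2 * v * ρ ^ (⌊u / (1 * b)⌋₊ + 1) + 2 * v * m (1 * b) * ρ / (1 - ρ)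
        ≤ 2 * v * E + 2 * c₂ * ρ / (1 - ρ) * v * E := by linarith
      _ = (2 + 2 * c₂ * ρ / (1 - ρ)) * v * E := by ring
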